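/- arXiv:1809.10219 — 3 statements merged into one kernel-verified Lean document; each statement's English description precedes it below -/
import Mathlib

section
/- The capped binary entropy hc is subadditive on the nonnegative reals: for all real numbers x₁, x₂ ≥ 0, hc(x₁ + x₂) ≤ hc(x₁) + hc(x₂). -/
/-- Binary entropy (base 2), with the convention `0 * log₂ 0 = 0`
(automatic since `Real.logb 2 0 = 0`). -/
noncomputable def binEnt (x : ℝ) : ℝ :=
  -(x * Real.logb 2 x) - (1 - x) * Real.logb 2 (1 - x)

/-- Capped binary entropy `hc(x) = h(min(x, 1/2))`. -/
noncomputable def cappedBinEnt (x : ℝ) : ℝ := binEnt (min x (1 / 2))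

lemma binEnt_eq (x : ℝ) : binEnt x = Real.binEntropy x / Real.log 2 := by
  simp only [binEnt, Real.binEntropy, Real.logb, Real.log_inv]
  ring

/-- The capped version of `Real.binEntropy`, concave on `[0, ∞)`. -/
lemma concave_cappedBinEntropy :
    ConcaveOn ℝ (Set.Ici (0 : ℝ)) (fun x => Real.binEntropy (min x 2⁻¹)) := by
  have hmono : MonotoneOn Real.binEntropy (Set.Icc 0 2⁻¹) :=
    Real.binEntropy_strictMonoOn.monotoneOn
  have hconc : ConcaveOn ℝ (Set.Icc (0:ℝ) 1) Real.binEntropy :=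
    Real.strictConcave_binEntropy.concaveOn
  constructor
  · exact convex_Ici 0
  · intro x hx y hy a b ha hb hab
    simp only [Set.mem_Ici] at hx hy
    have hmx : min x 2⁻¹ ∈ Set.Icc (0:ℝ) 2⁻¹ := ⟨le_min hx (by norm_num), min_le_right _ _⟩
    have hmy : min y 2⁻¹ ∈ Set.Icc (0:ℝ) 2⁻¹ := ⟨le_min hy (by norm_num), min_le_right _ _⟩
    have hcomb : a • min x 2⁻¹ + b • min y 2⁻¹ ∈ Set.Icc (0:ℝ) 2⁻¹ := by
      constructor
      · have := add_nonneg (mul_nonneg ha hmx.1) (mul_nonneg hb hmy.1)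
        simpa using this
      · calc a • min x 2⁻¹ + b • min y 2⁻¹ ≤ a * 2⁻¹ + b * 2⁻¹ := by
              exact add_le_add (mul_le_mul_of_nonneg_left hmx.2 ha)
                (mul_le_mul_of_nonneg_left hmy.2 hb)
          _ = 2⁻¹ := by rw [← add_mul, hab, one_mul]
    have hminle : a • min x 2⁻¹ + b • min y 2⁻¹ ≤ min (a • x + b • y) 2⁻¹ := by
      apply le_min
      · exact add_le_add (mul_le_mul_of_nonneg_left (min_le_left _ _) ha)
          (mul_le_mul_of_nonneg_left (min_le_left _ _) hb)
      · exact hcomb.2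
    have hmz : min (a • x + b • y) 2⁻¹ ∈ Set.Icc (0:ℝ) 2⁻¹ :=
      ⟨le_trans hcomb.1 hminle, min_le_right _ _⟩
    calc a • Real.binEntropy (min x 2⁻¹) + b • Real.binEntropy (min y 2⁻¹)
        ≤ Real.binEntropy (a • min x 2⁻¹ + b • min y 2⁻¹) := by
          have sub : Set.Icc (0:ℝ) 2⁻¹ ⊆ Set.Icc (0:ℝ) 1 :=
            Set.Icc_subset_Icc_right (by norm_num)
          exact hconc.2 (sub hmx) (sub hmy) ha hb hab
      _ ≤ Real.binEntropy (min (a • x + b • y) 2⁻¹) := hmono hcomb hmz hminle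

theorem stmt_1 (x₁ x₂ : ℝ) (h₁ : 0 ≤ x₁) (h₂ : 0 ≤ x₂) :
    cappedBinEnt (x₁ + x₂) ≤ cappedBinEnt x₁ + cappedBinEnt x₂ := by
  set F : ℝ → ℝ := fun x => Real.binEntropy (min x 2⁻¹) with hF
  have key : F (x₁ + x₂) ≤ F x₁ + F x₂ := by
    rcases eq_or_lt_of_le (add_nonneg h₁ h₂) with hs | hs
    · have hx1 : x₁ = 0 := by linarith [h₁, h₂]
      have hx2 : x₂ = 0 := by linarith
      simp [hx1, hx2, hF]
    · set s := x₁ + x₂ with hsdef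
      have hF0 : F 0 = 0 := by simp [hF]
      have h1 : (x₁ / s) • F s + (x₂ / s) • F 0 ≤ F x₁ := by
        have := concave_cappedBinEntropy.2 (Set.mem_Ici.mpr (le_of_lt hs))
          (Set.mem_Ici.mpr le_rfl) (div_nonneg h₁ hs.le) (div_nonneg h₂ hs.le)
          (by field_simp; exact hsdef.symm)
        have harg : (x₁ / s) • s + (x₂ / s) • (0:ℝ) = x₁ := by
          rw [smul_eq_mul, smul_eq_mul, mul_zero, add_zero, div_mul_cancel₀ _ hs.ne']
        rwa [harg] at this
      have h2 : (x₂ / s) • F s + (x₁ / s) • F 0 ≤ F x₂ := by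
        have := concave_cappedBinEntropy.2 (Set.mem_Ici.mpr (le_of_lt hs))
          (Set.mem_Ici.mpr le_rfl) (div_nonneg h₂ hs.le) (div_nonneg h₁ hs.le)
          (by field_simp; try ring)
        have harg : (x₂ / s) • s + (x₁ / s) • (0:ℝ) = x₂ := by
          rw [smul_eq_mul, smul_eq_mul, mul_zero, add_zero, div_mul_cancel₀ _ hs.ne']
        rwa [harg] at this
      have hsum : (x₁ / s + x₂ / s) = 1 := by field_simp; exact hsdef.symm
      rw [hF0] at h1 h2
      simp only [smul_eq_mul, mul_zero, add_zero] at h1 h2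
      have : (x₁ / s) * F s + (x₂ / s) * F s ≤ F x₁ + F x₂ := add_le_add h1 h2
      calc F s = (x₁ / s + x₂ / s) * F s := by rw [hsum, one_mul]
        _ = (x₁ / s) * F s + (x₂ / s) * F s := by ring
        _ ≤ F x₁ + F x₂ := this
  have hlog : (0:ℝ) < Real.log 2 := Real.log_pos (by norm_num)
  have hcb : ∀ y : ℝ, cappedBinEnt y = F y / Real.log 2 := by
    intro y
    rw [cappedBinEnt, binEnt_eq, hF]
    norm_num
  rw [hcb, hcb, hcb, ← add_div, div_le_div_iff_of_pos_right hlog]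
  exact key
end

section
/- If m, n, r, s are nonnegative real numbers with m·n = r·s, then |m − r| + |m − s| ≥ m − n. -/
theorem stmt_5 (m n r s : ℝ) (hm : 0 ≤ m) (hn : 0 ≤ n) (hr : 0 ≤ r) (hs : 0 ≤ s)
    (h : m * n = r * s) : m - n ≤ |m - r| + |m - s| := by
  rcases le_or_gt r n with h1 | h1
  · calc m - n ≤ m - r := by linarith
    _ ≤ |m - r| := le_abs_self _
    _ ≤ |m - r| + |m - s| := by linarith [abs_nonneg (m - s)]
  rcases le_or_gt s n with h2 | h2
  · calc m - n ≤ m - s := by linarith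
    _ ≤ |m - s| := le_abs_self _
    _ ≤ |m - r| + |m - s| := by linarith [abs_nonneg (m - r), le_abs_self (m - s)]
  -- r > n, s > n, so n ≥ 0 means rs > n². Also rs = mn forces r < m, s < m (m > n needed too)
  rcases le_or_gt m n with hmn | hmn
  · linarith [abs_nonneg (m - r), abs_nonneg (m - s)]
  have hn0 : 0 < n := by
    rcases hn.lt_or_eq with h' | h'
    · exact h'
    · exfalso; nlinarith
  have hrm : r < m := by nlinarith
  have hsm : s < m := by nlinarith
  rw [abs_of_pos (by linarith), abs_of_pos (by linarith)]
  nlinarith [mul_pos (sub_pos.2 h1) (sub_pos.2 h2)]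
end

section
/- Let Ω be a finite type, let p_a, p_b, p_c, p_d : Ω → ℝ be nonnegative functions satisfying the rectangle property p_a(t)·p_d(t) = p_b(t)·p_c(t) for every t ∈ Ω, let T ⊆ Ω, and let ε be a real number with ∑_{t ∈ T} (p_a(t) − p_d(t)) ≥ 2ε. Then ∑_{t ∈ Ω} |p_a(t) − p_b(t)| + ∑_{t ∈ Ω} |p_a(t) − p_c(t)| ≥ 2ε. -/
open Finset

lemma key_pt (a b c d : ℝ) (ha : 0 ≤ a) (hb : 0 ≤ b) (hc : 0 ≤ c) (hd : 0 ≤ d)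
    (hr : a * d = b * c) : a - d ≤ |a - b| + |a - c| := by
  rcases abs_cases (a - b) with (⟨h1, h1'⟩|⟨h1, h1'⟩) <;>
  rcases abs_cases (a - c) with (⟨h2, h2'⟩|⟨h2, h2'⟩) <;>
  rw [h1, h2] <;>
  nlinarith [mul_nonneg hb hc, mul_nonneg ha hd, sq_nonneg (a - b),
      sq_nonneg (a - c), mul_nonneg hb hd, mul_nonneg hc hd]

theorem stmt_8 {Ω : Type*} [Fintype Ω] (pa pb pc pd : Ω → ℝ)
    (ha : ∀ t, 0 ≤ pa t) (hb : ∀ t, 0 ≤ pb t) (hc : ∀ t, 0 ≤ pc t) (hd : ∀ t, 0 ≤ pd t)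
    (hrect : ∀ t, pa t * pd t = pb t * pc t)
    (T : Finset Ω) (ε : ℝ)
    (hT : 2 * ε ≤ ∑ t ∈ T, (pa t - pd t)) :
    2 * ε ≤ (∑ t, |pa t - pb t|) + ∑ t, |pa t - pc t| := by
  calc 2 * ε ≤ ∑ t ∈ T, (pa t - pd t) := hT
    _ ≤ ∑ t ∈ T, (|pa t - pb t| + |pa t - pc t|) := by
        apply Finset.sum_le_sum
        intro t _
        exact key_pt _ _ _ _ (ha t) (hb t) (hc t) (hd t) (hrect t)
    _ ≤ ∑ t, (|pa t - pb t| + |pa t - pc t|) := by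
        apply Finset.sum_le_sum_of_subset_of_nonneg (Finset.subset_univ T)
        intro t _ _
        positivity
    _ = (∑ t, |pa t - pb t|) + ∑ t, |pa t - pc t| := Finset.sum_add_distrib
end
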